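/- Let Q be a ccc preorder and let P be the collection of all infinite subsets of ℕ, preordered by A ≤ B iff B ⊆* A (i.e. B ∖ A is finite). Suppose R : Q → P → Prop satisfies: (i) if q ≤ q' and R(q,A) then R(q',A); (ii) if R(q,A), B is infinite and B ⊆* A, then R(q,B); (iii) if every q' ≥ q has an extension q'' ≥ q' with R(q'',A), then R(q,A); (iv) for every q ∈ Q and every infinite A ⊆ ℕ there exist q' ≥ q and an infinite B ⊆* A with R(q',B). Then for every infinite A ⊆ ℕ there exists an infinite B ⊆ ℕ with B ∖ A finite such that R(q,B) holds for every q ∈ Q. -/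
import Mathlib

open Set

/-- Transitivity of almost inclusion. -/
private lemma almost_trans {X Y Z : Set ℕ} (h1 : (X \ Y).Finite) (h2 : (Y \ Z).Finite) :
    (X \ Z).Finite :=
  (h1.union h2).subset (by intro a ha; simp only [mem_diff, mem_union] at *; tauto)

/-- A countable nonempty `⊆*`-chain of infinite subsets of ℕ has a pseudo-intersection. -/
private lemma pseudo (𝒞 : Set (Set ℕ)) (hc : 𝒞.Countable) (hne : 𝒞.Nonempty)
    (hinf : ∀ X ∈ 𝒞, X.Infinite)
    (hch : ∀ X ∈ 𝒞, ∀ Y ∈ 𝒞, (X \ Y).Finite ∨ (Y \ X).Finite) :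
    ∃ B : Set ℕ, B.Infinite ∧ ∀ X ∈ 𝒞, (B \ X).Finite := by
  classical
  obtain ⟨f, hf⟩ := hc.exists_eq_range hne
  have hfmem : ∀ n, f n ∈ 𝒞 := fun n => hf ▸ mem_range_self n
  -- g n : the ⊆*-least among f 0, ..., f n
  let g : ℕ → Set ℕ := fun n =>
    Nat.rec (f 0) (fun n X => if (X \ f (n + 1)).Finite then X else f (n + 1)) n
  have hg0 : g 0 = f 0 := rfl
  have hgsucc : ∀ n, g (n + 1) = if (g n \ f (n + 1)).Finite then g n else f (n + 1) :=
    fun n => rfl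
  have hgmem : ∀ n, g n ∈ 𝒞 := by
    intro n
    induction n with
    | zero => exact hfmem 0
    | succ n ih =>
      by_cases h : (g n \ f (n + 1)).Finite
      · rw [hgsucc, if_pos h]; exact ih
      · rw [hgsucc, if_neg h]; exact hfmem (n + 1)
  have hgstep : ∀ n, (g (n + 1) \ g n).Finite := by
    intro n
    by_cases h : (g n \ f (n + 1)).Finite
    · rw [hgsucc, if_pos h]; simp
    · rw [hgsucc, if_neg h]
      rcases hch _ (hgmem n) _ (hfmem (n + 1)) with h' | h'
      · exact absurd h' h
      · exact h'
  have hgf : ∀ n i, i ≤ n → (g n \ f i).Finite := by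
    intro n
    induction n with
    | zero =>
      intro i hi
      interval_cases i
      simp [hg0]
    | succ n ih =>
      intro i hi
      by_cases h : (g n \ f (n + 1)).Finite
      · rw [hgsucc, if_pos h]
        rcases Nat.lt_succ_iff_lt_or_eq.mp (Nat.lt_succ_of_le hi) with h' | h'
        · exact ih i (Nat.lt_succ_iff.mp h')
        · exact h' ▸ h
      · rw [hgsucc, if_neg h]
        rcases Nat.lt_succ_iff_lt_or_eq.mp (Nat.lt_succ_of_le hi) with h' | h'
        · rcases hch _ (hgmem n) _ (hfmem (n + 1)) with h'' | h''
          · exact absurd h'' h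
          · exact almost_trans h'' (ih i (Nat.lt_succ_iff.mp h'))
        · simp [h']
  have hgle : ∀ m n, m ≤ n → (g n \ g m).Finite := by
    intro m n hmn
    induction n with
    | zero => simp [Nat.le_zero.mp hmn]
    | succ n ih =>
      rcases Nat.lt_succ_iff_lt_or_eq.mp (Nat.lt_succ_of_le hmn) with h | h
      · exact almost_trans (hgstep n) (ih (Nat.lt_succ_iff.mp h))
      · simp [h]
  -- finite intersections
  set T : ℕ → Set ℕ := fun n => ⋂ i ∈ Finset.range (n + 1), g i with hT
  have hTsub : ∀ n i, i ≤ n → T n ⊆ g i := by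
    intro n i hi
    exact biInter_subset_of_mem (Finset.mem_range.mpr (Nat.lt_succ_of_le hi))
  have hTinf : ∀ n, (T n).Infinite := by
    intro n
    have h1 : (g n \ T n).Finite := by
      have : g n \ T n ⊆ ⋃ i ∈ Finset.range (n + 1), (g n \ g i) := by
        intro a ha
        simp only [mem_diff, hT, mem_iInter, not_forall] at ha
        obtain ⟨ha1, i, hi, hia⟩ := ha
        exact mem_biUnion hi ⟨ha1, hia⟩
      exact (Set.Finite.biUnion (Finset.range (n + 1)).finite_toSet
        (fun i hi => hgle i n (Nat.lt_succ_iff.mp (Finset.mem_range.mp hi)))).subset this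
    have h2 : (g n \ (g n \ T n)).Infinite := (hinf _ (hgmem n)).diff h1
    exact h2.mono (fun a ha => by
      simp only [mem_diff, not_and, not_not] at ha
      exact ha.2 ha.1)
  have hgt : ∀ n b, ∃ c ∈ T n, b < c := fun n b => (hTinf n).exists_gt b
  -- choose a strictly increasing sequence x with x n ∈ T n
  let x : ℕ → ℕ := fun n =>
    Nat.rec ((hgt 0 0).choose) (fun n xn => (hgt (n + 1) xn).choose) n
  have hx0 : x 0 ∈ T 0 := (hgt 0 0).choose_spec.1
  have hxmem : ∀ n, x n ∈ T n := by
    intro n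
    cases n with
    | zero => exact hx0
    | succ n => exact (hgt (n + 1) (x n)).choose_spec.1
  have hxlt : ∀ n, x n < x (n + 1) := fun n => (hgt (n + 1) (x n)).choose_spec.2
  have hxmono : StrictMono x := strictMono_nat_of_lt_succ hxlt
  refine ⟨range x, infinite_range_of_injective hxmono.injective, ?_⟩
  intro X hX
  obtain ⟨i, rfl⟩ := hf ▸ hX
  have h1 : (range x \ g i).Finite := by
    refine ((finite_Iio i).image x).subset ?_
    rintro a ⟨⟨m, rfl⟩, hnot⟩
    refine ⟨m, ?_, rfl⟩
    by_contra hm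
    simp only [mem_Iio, not_lt] at hm
    exact hnot (hTsub m i hm (hxmem m))
  exact almost_trans h1 (hgf i i le_rfl)

/-- Core (*) of Claim 3.1 instantiated at `ℙ_{𝒜*[V]}`: the preorder of infinite
subsets of `ℕ` ordered by `A ≤ B ↔ B ⊆* A` (reverse almost-inclusion).  If `Q` is
ccc and `R : Q → (infinite subsets of ℕ) → Prop` has the standard properties of the
relation “`q` forces `A ∈ ℐ`”, then every infinite `A ⊆ ℕ` has an infinite
`B ⊆* A` with `R q B` for all `q`. -/
theorem stmt1 {Q : Type*} [Preorder Q]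
    (hccc : ∀ S : Set Q,
      (∀ x ∈ S, ∀ y ∈ S, x ≠ y → ¬∃ z, x ≤ z ∧ y ≤ z) → S.Countable)
    (R : Q → Set ℕ → Prop)
    (h1 : ∀ q q' : Q, ∀ A : Set ℕ, q ≤ q' → R q A → R q' A)
    (h2 : ∀ q : Q, ∀ A B : Set ℕ, R q A → B.Infinite → (B \ A).Finite → R q B)
    (h3 : ∀ q : Q, ∀ A : Set ℕ, A.Infinite →
      (∀ q', q ≤ q' → ∃ q'', q' ≤ q'' ∧ R q'' A) → R q A)
    (h4 : ∀ q : Q, ∀ A : Set ℕ, A.Infinite →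
      ∃ q' : Q, ∃ B : Set ℕ, q ≤ q' ∧ B.Infinite ∧ (B \ A).Finite ∧ R q' B) :
    ∀ A : Set ℕ, A.Infinite →
      ∃ B : Set ℕ, B.Infinite ∧ (B \ A).Finite ∧ ∀ q : Q, R q B := by
  intro A hA
  classical
  -- good families of conditions with pairwise incompatible first coordinates
  set Good : Set (Set (Q × Set ℕ)) :=
    {F | (∀ p ∈ F, p.2.Infinite ∧ (p.2 \ A).Finite ∧ R p.1 p.2) ∧
      (∀ p ∈ F, ∀ p' ∈ F, p.1 ≠ p'.1 → ¬∃ z, p.1 ≤ z ∧ p'.1 ≤ z) ∧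
      (∀ p ∈ F, ∀ p' ∈ F, p.1 = p'.1 → p = p') ∧
      (∀ p ∈ F, ∀ p' ∈ F, (p.2 \ p'.2).Finite ∨ (p'.2 \ p.2).Finite)} with hGood
  obtain ⟨F, hFmax⟩ := zorn_subset Good (by
    intro c hcG hchain
    refine ⟨⋃₀ c, ?_, fun s hs => subset_sUnion_of_mem hs⟩
    have hmem : ∀ p ∈ ⋃₀ c, ∀ p' ∈ ⋃₀ c, ∃ F ∈ c, p ∈ F ∧ p' ∈ F := by
      rintro p ⟨F1, hF1, hp⟩ p' ⟨F2, hF2, hp'⟩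
      rcases hchain.total hF1 hF2 with h | h
      · exact ⟨F2, hF2, h hp, hp'⟩
      · exact ⟨F1, hF1, hp, h hp'⟩
    refine ⟨?_, ?_, ?_, ?_⟩
    · rintro p ⟨F1, hF1, hp⟩
      exact (hcG hF1).1 p hp
    · intro p hp p' hp' hne
      obtain ⟨F1, hF1, hp1, hp'1⟩ := hmem p hp p' hp'
      exact (hcG hF1).2.1 p hp1 p' hp'1 hne
    · intro p hp p' hp' heq
      obtain ⟨F1, hF1, hp1, hp'1⟩ := hmem p hp p' hp'
      exact (hcG hF1).2.2.1 p hp1 p' hp'1 heq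
    · intro p hp p' hp'
      obtain ⟨F1, hF1, hp1, hp'1⟩ := hmem p hp p' hp'
      exact (hcG hF1).2.2.2 p hp1 p' hp'1)
  obtain ⟨⟨hF1, hF2, hF3, hF4⟩, hFm⟩ := hFmax
  -- F is countable by ccc
  have hfst : (Prod.fst '' F).Countable := by
    refine hccc _ ?_
    rintro x ⟨p, hp, rfl⟩ y ⟨p', hp', rfl⟩ hne
    exact hF2 p hp p' hp' hne
  have hFcnt : F.Countable :=
    Set.countable_of_injective_of_countable_image
      (fun p hp p' hp' h => hF3 p hp p' hp' h) hfst
  -- pseudo-intersection of all second coordinates together with A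
  set 𝒞 : Set (Set ℕ) := insert A (Prod.snd '' F) with h𝒞
  have hBin : ∀ X ∈ 𝒞, X.Infinite ∧ (X \ A).Finite := by
    rintro X (rfl | ⟨p, hp, rfl⟩)
    · simpa using hA
    · exact ⟨(hF1 p hp).1, (hF1 p hp).2.1⟩
  obtain ⟨B, hBinf, hBsub⟩ := pseudo 𝒞
    ((hFcnt.image Prod.snd).insert A) ⟨A, mem_insert _ _⟩
    (fun X hX => (hBin X hX).1)
    (by
      rintro X hX Y hY
      rcases hX with rfl | ⟨p, hp, rfl⟩
      · exact Or.inr (hBin Y hY).2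
      · rcases hY with rfl | ⟨p', hp', rfl⟩
        · exact Or.inl (hF1 p hp).2.1
        · exact hF4 p hp p' hp')
  have hBA : (B \ A).Finite := hBsub A (mem_insert _ _)
  have hBF : ∀ p ∈ F, (B \ p.2).Finite := fun p hp =>
    hBsub p.2 (mem_insert_of_mem _ ⟨p, hp, rfl⟩)
  -- maximality: every q is compatible with some condition in F
  have hmax : ∀ q : Q, ∃ p ∈ F, ∃ z, q ≤ z ∧ p.1 ≤ z := by
    intro q
    by_contra hcon
    push_neg at hcon
    obtain ⟨q', B', hqq', hB'inf, hB'B, hRB'⟩ := h4 q B hBinf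
    have hq'F : ∀ p ∈ F, ¬∃ z, q' ≤ z ∧ p.1 ≤ z := by
      rintro p hp ⟨z, hz1, hz2⟩
      exact hcon p hp z (le_trans hqq' hz1) hz2
    have hp0 : (q', B') ∉ F := fun h => hcon (q', B') h q' hqq' le_rfl
    have hGood' : insert (q', B') F ∈ Good := by
      refine ⟨?_, ?_, ?_, ?_⟩
      · rintro p (rfl | hp)
        · exact ⟨hB'inf, almost_trans hB'B hBA, hRB'⟩
        · exact hF1 p hp
      · rintro p (rfl | hp) p' (rfl | hp') hne
        · exact absurd rfl hne
        · exact hq'F p' hp'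
        · rintro ⟨z, hz1, hz2⟩
          exact hq'F p hp ⟨z, hz2, hz1⟩
        · exact hF2 p hp p' hp' hne
      · rintro p (rfl | hp) p' (rfl | hp') heq
        · rfl
        · exact absurd ⟨q', le_rfl, heq.ge⟩ (hq'F p' hp')
        · exact absurd ⟨q', le_rfl, heq.le⟩ (hq'F p hp)
        · exact hF3 p hp p' hp' heq
      · rintro p (rfl | hp) p' (rfl | hp')
        · simp
        · exact Or.inl (almost_trans hB'B (hBF p' hp'))
        · exact Or.inr (almost_trans hB'B (hBF p hp))
        · exact hF4 p hp p' hp'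
    exact hp0 (hFm hGood' (subset_insert _ F) (mem_insert _ F))
  -- conclusion
  refine ⟨B, hBinf, hBA, fun q => ?_⟩
  refine h3 q B hBinf (fun q' hqq' => ?_)
  obtain ⟨p, hp, z, hz1, hz2⟩ := hmax q'
  exact ⟨z, hz1, h1 p.1 z B hz2 (h2 p.1 p.2 B (hF1 p hp).2.2 hBinf (hBF p hp))⟩
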